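/- If H is submodular in a finite group G and K ≤ G, then H ∩ K is submodular in K. -/
import Mathlib


universe u

/-- A class of groups is subgroup-closed if it is closed under taking subgroups. -/
def IsSubgroupClosed (F : ∀ (G : Type u) [Group G], Prop) : Prop :=
  ∀ (G : Type u) [Group G] (H : Subgroup G), F G → F H

/-- A formation: a class of groups closed under isomorphisms, quotients and
subdirect products. -/
structure IsFormation (F : ∀ (G : Type u) [Group G], Prop) : Prop where
  iso : ∀ (G H : Type u) [Group G] [Group H], G ≃* H → F G → F H
  quot : ∀ (G : Type u) [Group G] (N : Subgroup G) (_ : N.Normal), F G → F (G ⧸ N)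
  subdirect : ∀ (G : Type u) [Group G] (N₁ N₂ : Subgroup G) (_ : N₁.Normal) (_ : N₂.Normal),
    F (G ⧸ N₁) → F (G ⧸ N₂) → N₁ ⊓ N₂ = ⊥ → F G

/-- The 𝔉-fResidual of `G`: the smallest normal subgroup with quotient in `F`. -/
def fResidual (F : ∀ (G : Type u) [Group G], Prop) (G : Type u) [Group G] : Subgroup G :=
  sInf {N : Subgroup G | ∃ _ : N.Normal, F (G ⧸ N)}

/-- `KSubnormal F H K` : there is a chain `H = H₀ ≤ … ≤ Hₙ = K` of subgroups of `G`
such that each `Hᵢ` is normal in `Hᵢ₊₁` or contains the `F`-fResidual of `Hᵢ₊₁`. -/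
inductive KSubnormal (F : ∀ (G : Type u) [Group G], Prop) {G : Type u} [Group G] :
    Subgroup G → Subgroup G → Prop
  | refl (H : Subgroup G) : KSubnormal F H H
  | step {H K L : Subgroup G} : KSubnormal F H K → K ≤ L →
      ((K.subgroupOf L).Normal ∨ fResidual F ↥L ≤ K.subgroupOf L) → KSubnormal F H L

/-- `M` is a modular element of the subgroup lattice of `G`. -/
def IsModularSubgroup {G : Type u} [Group G] (M : Subgroup G) : Prop :=
  (∀ X Y : Subgroup G, X ≤ Y → (X ⊔ M) ⊓ Y = X ⊔ (M ⊓ Y)) ∧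
  (∀ X Y : Subgroup G, M ≤ Y → (M ⊔ X) ⊓ Y = M ⊔ (X ⊓ Y))

/-- `Submodular H K` : a chain from `H` to `K` with each term modular in the next. -/
inductive Submodular {G : Type u} [Group G] : Subgroup G → Subgroup G → Prop
  | refl (H : Subgroup G) : Submodular H H
  | step {H K L : Subgroup G} : Submodular H K → K ≤ L →
      IsModularSubgroup (K.subgroupOf L) → Submodular H L

/-- `SubnormalIn H K` : a chain from `H` to `K` with each term normal in the next. -/
inductive SubnormalIn {G : Type u} [Group G] : Subgroup G → Subgroup G → Prop
  | refl (H : Subgroup G) : SubnormalIn H H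
  | step {H K L : Subgroup G} : SubnormalIn H K → K ≤ L →
      (K.subgroupOf L).Normal → SubnormalIn H L

/-- A group is supersolvable if it has a normal series with cyclic factors:
each term is normal in `G` and each successive term is generated by the previous
one together with a single element. -/
def IsSupersolvable (G : Type u) [Group G] : Prop :=
  ∃ (n : ℕ) (s : Fin (n + 1) → Subgroup G), s 0 = ⊥ ∧ s (Fin.last n) = ⊤ ∧
    (∀ i, (s i).Normal) ∧
    ∀ i : Fin n, ∃ g : G, s i.succ = s i.castSucc ⊔ Subgroup.zpowers g

/-- The class 𝔘₁ of supersolvable groups of square-free exponent. -/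
def U1 : ∀ (G : Type u) [Group G], Prop := fun G _ =>
  IsSupersolvable G ∧ Squarefree (Monoid.exponent G)

/-- The solvable radical: the largest normal solvable subgroup. -/
def solvRad (G : Type u) [Group G] : Subgroup G :=
  sSup {N : Subgroup G | N.Normal ∧ IsSolvable ↥N}

/-- The Fitting subgroup: the largest normal nilpotent subgroup. -/
def fitting (G : Type u) [Group G] : Subgroup G :=
  sSup {N : Subgroup G | N.Normal ∧ Group.IsNilpotent ↥N}



section Aux

variable {G : Type u} [Group G]

/-- Ambient formulation of modularity of `M` within `L`. -/
def ModIn (M L : Subgroup G) : Prop :=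
  M ≤ L ∧
  (∀ X Y : Subgroup G, X ≤ Y → Y ≤ L → (X ⊔ M) ⊓ Y = X ⊔ (M ⊓ Y)) ∧
  (∀ X Y : Subgroup G, X ≤ L → M ≤ Y → Y ≤ L → (M ⊔ X) ⊓ Y = M ⊔ (X ⊓ Y))

theorem modIn_of_isModular {M L : Subgroup G} (hML : M ≤ L)
    (h : (∀ X Y : Subgroup ↥L, X ≤ Y → (X ⊔ M.subgroupOf L) ⊓ Y = X ⊔ (M.subgroupOf L ⊓ Y)) ∧
      (∀ X Y : Subgroup ↥L, M.subgroupOf L ≤ Y →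
        (M.subgroupOf L ⊔ X) ⊓ Y = M.subgroupOf L ⊔ (X ⊓ Y))) : ModIn M L := by
  obtain ⟨h1, h2⟩ := h
  have hinj := L.subtype_injective
  have hmapM : (M.subgroupOf L).map L.subtype = M := by
    rw [Subgroup.subgroupOf_map_subtype, inf_eq_left.mpr hML]
  refine ⟨hML, ?_, ?_⟩
  · intro X Y hXY hYL
    have hXL : X ≤ L := hXY.trans hYL
    have := h1 (X.subgroupOf L) (Y.subgroupOf L)
      (Subgroup.comap_mono hXY)
    have := congrArg (Subgroup.map L.subtype) this
    rwa [Subgroup.map_inf _ _ _ hinj, Subgroup.map_sup, Subgroup.map_sup,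
      Subgroup.map_inf _ _ _ hinj, hmapM, Subgroup.subgroupOf_map_subtype,
      Subgroup.subgroupOf_map_subtype, inf_eq_left.mpr hXL, inf_eq_left.mpr hYL] at this
  · intro X Y hXL hMY hYL
    have := h2 (X.subgroupOf L) (Y.subgroupOf L)
      (Subgroup.comap_mono hMY)
    have := congrArg (Subgroup.map L.subtype) this
    rwa [Subgroup.map_inf _ _ _ hinj, Subgroup.map_sup, Subgroup.map_sup,
      Subgroup.map_inf _ _ _ hinj, hmapM, Subgroup.subgroupOf_map_subtype,
      Subgroup.subgroupOf_map_subtype, inf_eq_left.mpr hXL, inf_eq_left.mpr hYL] at this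

theorem isModular_of_modIn {M L : Subgroup G} (h : ModIn M L) :
    (∀ X Y : Subgroup ↥L, X ≤ Y → (X ⊔ M.subgroupOf L) ⊓ Y = X ⊔ (M.subgroupOf L ⊓ Y)) ∧
      (∀ X Y : Subgroup ↥L, M.subgroupOf L ≤ Y →
        (M.subgroupOf L ⊔ X) ⊓ Y = M.subgroupOf L ⊔ (X ⊓ Y)) := by
  obtain ⟨hML, h1, h2⟩ := h
  have hinj := L.subtype_injective
  have hmapM : (M.subgroupOf L).map L.subtype = M := by
    rw [Subgroup.subgroupOf_map_subtype, inf_eq_left.mpr hML]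
  constructor
  · intro X Y hXY
    apply Subgroup.map_injective hinj
    rw [Subgroup.map_inf _ _ _ hinj, Subgroup.map_sup, Subgroup.map_sup,
      Subgroup.map_inf _ _ _ hinj, hmapM]
    exact h1 _ _ (Subgroup.map_mono hXY) (Subgroup.map_subtype_le Y)
  · intro X Y hMY
    apply Subgroup.map_injective hinj
    rw [Subgroup.map_inf _ _ _ hinj, Subgroup.map_sup, Subgroup.map_sup,
      Subgroup.map_inf _ _ _ hinj, hmapM]
    refine h2 _ _ (Subgroup.map_subtype_le X) ?_ (Subgroup.map_subtype_le Y)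
    calc M = (M.subgroupOf L).map L.subtype := hmapM.symm
    _ ≤ Y.map L.subtype := Subgroup.map_mono hMY

/-- Key lattice lemma: if `M` is modular within `L` and `H ≤ L`,
then `M ⊓ H` is modular within `H`. -/
theorem modIn_inf {M L H : Subgroup G} (h : ModIn M L) (hHL : H ≤ L) :
    ModIn (M ⊓ H) H := by
  obtain ⟨hML, h1, h2⟩ := h
  refine ⟨inf_le_right, ?_, ?_⟩
  · intro X Y hXY hYH
    have hXH : X ≤ H := hXY.trans hYH
    have e1 : X ⊔ M ⊓ H = (X ⊔ M) ⊓ H := (h1 X H hXH hHL).symm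
    rw [e1, inf_assoc, inf_eq_right.mpr hYH, h1 X Y hXY (hYH.trans hHL)]
    congr 1
    rw [inf_assoc, inf_eq_right.mpr hYH]
  · intro X Y hXH hWY hYH
    have hXL : X ≤ L := hXH.trans hHL
    have hYL : Y ≤ L := hYH.trans hHL
    -- (M⊓H ⊔ X) ⊓ Y = (X ⊔ M) ⊓ Y
    have e1 : M ⊓ H ⊔ X = (X ⊔ M) ⊓ H := by
      rw [sup_comm, ← h1 X H hXH hHL]
    rw [e1, inf_assoc, inf_eq_right.mpr hYH]
    -- (X⊔M)⊓Y = (M ⊔ X₂) ⊓ Y with X₂ = X ⊓ (M ⊔ Y)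
    set X₂ := X ⊓ (M ⊔ Y) with hX₂
    have e2 : (X ⊔ M) ⊓ Y = (M ⊔ X₂) ⊓ Y := by
      have : (M ⊔ X) ⊓ (M ⊔ Y) = M ⊔ X₂ :=
        h2 X (M ⊔ Y) hXL le_sup_left (sup_le hML hYL)
      rw [← this, sup_comm X M, inf_assoc]
      congr 1
      exact (inf_eq_right.mpr le_sup_right).symm
    -- X₂ ≤ Y
    have hX₂Y : X₂ ≤ Y := by
      have hsubH : X₂ ⊔ Y ≤ H := sup_le (inf_le_left.trans hXH) hYH
      have key := h1 Y (X₂ ⊔ Y) le_sup_right (hsubH.trans hHL)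
      have hLHS : (Y ⊔ M) ⊓ (X₂ ⊔ Y) = X₂ ⊔ Y :=
        inf_eq_right.mpr (sup_le (inf_le_right.trans (le_of_eq (sup_comm M Y))) le_sup_left)
      rw [hLHS] at key
      have hMW : M ⊓ (X₂ ⊔ Y) ≤ Y :=
        le_trans (le_inf inf_le_left (inf_le_right.trans hsubH)) hWY
      have hfin : X₂ ⊔ Y ≤ Y := key.le.trans (sup_le le_rfl hMW)
      exact le_sup_left.trans hfin
    -- X₂ = X ⊓ Y
    have hX₂eq : X₂ = X ⊓ Y := le_antisymm (le_inf inf_le_left hX₂Y)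
      (le_inf inf_le_left (inf_le_right.trans le_sup_right))
    rw [e2]
    have e3 : (M ⊔ X₂) ⊓ Y = (X₂ ⊔ M ⊓ H) ⊓ Y := by
      rw [sup_comm M X₂, ← h1 X₂ H (inf_le_left.trans hXH) hHL, inf_assoc, inf_eq_right.mpr hYH]
    rw [e3, hX₂eq, inf_eq_left.mpr (sup_le (inf_le_right) (hWY))]
    exact sup_comm _ _

end Aux

theorem submodular_inf_aux {G : Type u} [Group G] {A B : Subgroup G}
    (h : Submodular A B) (K : Subgroup G) : Submodular (A ⊓ K) (B ⊓ K) := by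
  induction h with
  | refl => exact Submodular.refl _
  | @step L' L'' hsub hle hmod ih =>
    refine Submodular.step ih (inf_le_inf_right K hle) ?_
    have hmod' : ModIn L' L'' := modIn_of_isModular hle hmod
    have h2 := modIn_inf hmod' (inf_le_left : L'' ⊓ K ≤ L'')
    have heq : L' ⊓ (L'' ⊓ K) = L' ⊓ K := by
      rw [← inf_assoc, inf_eq_left.mpr hle]
    rw [heq] at h2
    exact isModular_of_modIn h2

theorem stmt6 {G : Type u} [Group G] [Finite G] {H : Subgroup G}
    (h : Submodular H ⊤) (K : Subgroup G) :
    Submodular (H ⊓ K) K := by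
  have := submodular_inf_aux h K
  rwa [top_inf_eq] at this
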